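/- Let N, p ≥ 1 satisfy p/√(2π) > log(Np) and log(Np) ≥ 2. Then for every t ∈ ℝ, N·p·(1 − Φ(t)^p)^{N−1}·Φ(t)^{p−1}·φ(t) ≤ 2(√2 + 2)·(log(Np))^{3/2}. Equivalently, the probability density function f_Z of Z = min_{k∈[N]} max_{j∈[p]} W_{kj}, where the W_{kj} are i.i.d. standard normal random variables, satisfies sup_{t∈ℝ} f_Z(t) ≤ 2(√2 + 2)·(log(Np))^{3/2}. -/

import Mathlib

open MeasureTheory ProbabilityTheory Real Filter Set


/-- The standard normal cumulative distribution function `Φ`. -/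
noncomputable def stdNormalCDF (t : ℝ) : ℝ :=
  ((ProbabilityTheory.gaussianReal 0 1) (Set.Iic t)).toReal

/-- The standard normal density `φ`. -/
noncomputable def stdNormalPDF (t : ℝ) : ℝ :=
  Real.exp (-(t ^ 2) / 2) / Real.sqrt (2 * Real.pi)

noncomputable def stdNormalTail (t : ℝ) : ℝ := ∫ x in Set.Ioi t, stdNormalPDF x

lemma gaussianPDFReal_eq (x : ℝ) : gaussianPDFReal 0 1 x = stdNormalPDF x := by
  simp [gaussianPDFReal, stdNormalPDF, div_eq_inv_mul, neg_div]

lemma stdNormalPDF_pos (x : ℝ) : 0 < stdNormalPDF x := by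
  apply div_pos (Real.exp_pos _)
  positivity

lemma sqrt_two_pi_pos : 0 < Real.sqrt (2 * Real.pi) := by positivity

lemma stdNormalPDF_le (x : ℝ) : stdNormalPDF x ≤ (Real.sqrt (2 * Real.pi))⁻¹ := by
  rw [stdNormalPDF, div_eq_mul_inv]
  nlinarith [Real.exp_le_one_iff.2 (by nlinarith [sq_nonneg x] : -(x^2)/2 ≤ 0),
    inv_pos.2 sqrt_two_pi_pos, Real.exp_pos (-(x^2)/2)]

lemma stdNormalPDF_continuous : Continuous stdNormalPDF := by
  unfold stdNormalPDF
  fun_prop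

lemma stdNormalPDF_integrable : Integrable stdNormalPDF := by
  have h := integrable_exp_neg_mul_sq (by norm_num : (0:ℝ) < 1/2)
  have : stdNormalPDF = fun x => Real.exp (-(1/2) * x^2) * (Real.sqrt (2*Real.pi))⁻¹ := by
    funext x; rw [stdNormalPDF, div_eq_mul_inv]; ring_nf
  rw [this]
  exact h.mul_const _

lemma stdNormalPDF_integral : ∫ x, stdNormalPDF x = 1 := by
  rw [← funext gaussianPDFReal_eq]
  exact integral_gaussianPDFReal_eq_one 0 one_ne_zero

lemma stdNormalCDF_eq (t : ℝ) : stdNormalCDF t = ∫ x in Set.Iic t, stdNormalPDF x := by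
  rw [stdNormalCDF, gaussianReal_apply_eq_integral 0 one_ne_zero,
    ENNReal.toReal_ofReal]
  · exact setIntegral_congr_fun measurableSet_Iic (fun x _ => gaussianPDFReal_eq x)
  · exact setIntegral_nonneg measurableSet_Iic fun x _ => (gaussianPDFReal_pos 0 1 x one_ne_zero).le

lemma stdNormalCDF_add_tail (t : ℝ) : stdNormalCDF t + stdNormalTail t = 1 := by
  rw [stdNormalCDF_eq, stdNormalTail, intervalIntegral.integral_Iic_add_Ioi
    stdNormalPDF_integrable.integrableOn stdNormalPDF_integrable.integrableOn,
    stdNormalPDF_integral]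

lemma stdNormalCDF_pos (t : ℝ) : 0 < stdNormalCDF t := by
  rw [stdNormalCDF_eq]
  rw [setIntegral_pos_iff_support_of_nonneg_ae]
  · have : Function.support stdNormalPDF = Set.univ := by
      ext x; simp [Function.mem_support, (stdNormalPDF_pos x).ne']
    rw [this, Set.univ_inter]
    simp [Real.volume_Iic]
  · exact Eventually.of_forall fun x => (stdNormalPDF_pos x).le
  · exact stdNormalPDF_integrable.integrableOn

lemma stdNormalTail_pos (t : ℝ) : 0 < stdNormalTail t := by
  rw [stdNormalTail]
  rw [setIntegral_pos_iff_support_of_nonneg_ae]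
  · have : Function.support stdNormalPDF = Set.univ := by
      ext x; simp [Function.mem_support, (stdNormalPDF_pos x).ne']
    rw [this, Set.univ_inter]
    simp [Real.volume_Ioi]
  · exact Eventually.of_forall fun x => (stdNormalPDF_pos x).le
  · exact stdNormalPDF_integrable.integrableOn

lemma stdNormalCDF_lt_one (t : ℝ) : stdNormalCDF t < 1 := by
  nlinarith [stdNormalTail_pos t, stdNormalCDF_add_tail t]

lemma stdNormalCDF_zero : stdNormalCDF 0 = 1/2 := by
  have h : stdNormalCDF 0 = stdNormalTail 0 := by
    rw [stdNormalCDF_eq, stdNormalTail]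
    have : ∀ x, stdNormalPDF (-x) = stdNormalPDF x := by
      intro x; rw [stdNormalPDF, stdNormalPDF]; ring_nf
    calc ∫ x in Set.Iic (0:ℝ), stdNormalPDF x
        = ∫ x in Set.Iic (0:ℝ), stdNormalPDF (-x) := by
          exact setIntegral_congr_fun measurableSet_Iic (fun x _ => (this x).symm)
      _ = ∫ x in Set.Ioi (-(0:ℝ)), stdNormalPDF x := integral_comp_neg_Iic 0 _
      _ = ∫ x in Set.Ioi (0:ℝ), stdNormalPDF x := by norm_num
  have := stdNormalCDF_add_tail 0
  linarith

lemma stdNormalCDF_mono : Monotone stdNormalCDF := by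
  intro a b hab
  rw [stdNormalCDF_eq, stdNormalCDF_eq]
  apply setIntegral_mono_set stdNormalPDF_integrable.integrableOn
    (Eventually.of_forall fun x => (stdNormalPDF_pos x).le)
  exact HasSubset.Subset.eventuallyLE (Set.Iic_subset_Iic.2 hab)

lemma stdNormalTail_anti : Antitone stdNormalTail := by
  intro a b hab
  rw [stdNormalTail, stdNormalTail]
  apply setIntegral_mono_set stdNormalPDF_integrable.integrableOn
    (Eventually.of_forall fun x => (stdNormalPDF_pos x).le)
  exact HasSubset.Subset.eventuallyLE (Set.Ioi_subset_Ioi hab)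

lemma stdNormalPDF_hasDeriv (x : ℝ) :
    HasDerivAt stdNormalPDF (-x * stdNormalPDF x) x := by
  have h1 : HasDerivAt (fun y : ℝ => -(y^2)/2) (-x) x := by
    have := ((hasDerivAt_pow 2 x).neg).div_const 2
    simpa using this.congr_deriv (by ring)
  have h2 := (h1.exp).div_const (Real.sqrt (2*Real.pi))
  have : stdNormalPDF = fun y : ℝ => Real.exp (-(y^2)/2) / Real.sqrt (2*Real.pi) := rfl
  rw [this]
  refine h2.congr_deriv ?_
  simp [stdNormalPDF, div_eq_mul_inv]
  ring

lemma mul_pdf_integrableOn (t : ℝ) :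
    IntegrableOn (fun x => x * stdNormalPDF x) (Set.Ioi t) := by
  have h := integrable_mul_exp_neg_mul_sq (by norm_num : (0:ℝ) < 1/2)
  have : (fun x : ℝ => x * stdNormalPDF x)
      = fun x => (x * Real.exp (-(1/2) * x^2)) * (Real.sqrt (2*Real.pi))⁻¹ := by
    funext x; rw [stdNormalPDF, div_eq_mul_inv]; ring_nf
  rw [this]
  exact (h.mul_const _).integrableOn

lemma tendsto_pdf_atTop : Tendsto stdNormalPDF atTop (nhds 0) := by
  apply squeeze_zero' (Eventually.of_forall fun x => (stdNormalPDF_pos x).le)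
    (g := fun x => Real.exp (-x) * (Real.sqrt (2*Real.pi))⁻¹)
  · filter_upwards [eventually_ge_atTop (2:ℝ)] with x hx
    rw [stdNormalPDF, div_eq_mul_inv]
    have : -(x^2)/2 ≤ -x := by nlinarith
    have h2 := Real.exp_le_exp.2 this
    have : (0:ℝ) < (Real.sqrt (2*Real.pi))⁻¹ := by positivity
    nlinarith
  · simpa using (Real.tendsto_exp_neg_atTop_nhds_zero).mul_const (Real.sqrt (2*Real.pi))⁻¹

lemma integral_mul_pdf_Ioi (t : ℝ) :
    ∫ x in Set.Ioi t, x * stdNormalPDF x = stdNormalPDF t := by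
  have h := integral_Ioi_of_hasDerivAt_of_tendsto' (f := fun x => -stdNormalPDF x)
    (f' := fun x => x * stdNormalPDF x) (a := t) (m := 0)
    (fun x _ => by have := (stdNormalPDF_hasDeriv x).neg; simp at this; exact this)
    (mul_pdf_integrableOn t) (by simpa using tendsto_pdf_atTop.neg)
  rw [h]; ring

lemma mills_upper {t : ℝ} (ht : 0 < t) : t * stdNormalTail t ≤ stdNormalPDF t := by
  have h1 : stdNormalTail t ≤ (1/t) * ∫ x in Set.Ioi t, x * stdNormalPDF x := by
    rw [← integral_const_mul]
    apply setIntegral_mono_on stdNormalPDF_integrable.integrableOn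
      ((mul_pdf_integrableOn t).const_mul _) measurableSet_Ioi
    intro x hx
    rw [Set.mem_Ioi] at hx
    have : 1 ≤ (1/t) * x := by rw [div_mul_eq_mul_div, le_div_iff₀ ht]; linarith
    nlinarith [stdNormalPDF_pos x]
  rw [integral_mul_pdf_Ioi] at h1
  calc t * stdNormalTail t ≤ t * ((1/t) * stdNormalPDF t) :=
        mul_le_mul_of_nonneg_left h1 ht.le
    _ = stdNormalPDF t := by field_simp

lemma stdNormalTail_eq (s : ℝ) :
    stdNormalTail s = stdNormalTail 0 - ∫ x in (0:ℝ)..s, stdNormalPDF x := by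
  have int := stdNormalPDF_integrable.integrableOn (s := Set.Iic s)
  have int0 := stdNormalPDF_integrable.integrableOn (s := Set.Iic (0:ℝ))
  have h1 := intervalIntegral.integral_Iic_add_Ioi (μ := volume) (b := s)
    int stdNormalPDF_integrable.integrableOn
  have h2 := intervalIntegral.integral_Iic_add_Ioi (μ := volume) (b := (0:ℝ))
    int0 stdNormalPDF_integrable.integrableOn
  have h3 := intervalIntegral.integral_Iic_sub_Iic (μ := volume) (f := stdNormalPDF)
    (a := (0:ℝ)) (b := s) int0 int
  show (∫ x in Set.Ioi s, stdNormalPDF x) = (∫ x in Set.Ioi (0:ℝ), stdNormalPDF x) - _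
  linarith

lemma stdNormalTail_hasDeriv (x : ℝ) :
    HasDerivAt stdNormalTail (-stdNormalPDF x) x := by
  have h : HasDerivAt (fun s => stdNormalTail 0 - ∫ u in (0:ℝ)..s, stdNormalPDF u)
      (-stdNormalPDF x) x := by
    apply HasDerivAt.const_sub
    exact intervalIntegral.integral_hasDerivAt_right
      (stdNormalPDF_integrable.intervalIntegrable)
      (stdNormalPDF_continuous.stronglyMeasurable.stronglyMeasurableAtFilter)
      stdNormalPDF_continuous.continuousAt
  exact h.congr_of_eventuallyEq (Eventually.of_forall fun s => stdNormalTail_eq s)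

lemma millsAux_hasDeriv (s : ℝ) :
    HasDerivAt (fun s => (s^2 + 1) * stdNormalTail s - s * stdNormalPDF s)
      (2 * (s * stdNormalTail s - stdNormalPDF s)) s := by
  have h1 := ((hasDerivAt_pow 2 s).add_const 1).mul (stdNormalTail_hasDeriv s)
  have h2 := (hasDerivAt_id s).mul (stdNormalPDF_hasDeriv s)
  refine (h1.sub h2).congr_deriv ?_
  simp only [id]
  push_cast
  ring

lemma tendsto_millsAux :
    Tendsto (fun s => (s^2 + 1) * stdNormalTail s - s * stdNormalPDF s) atTop (nhds 0) := by
  have hbase : Tendsto (fun s : ℝ => s^2 * Real.exp (-s) * (Real.sqrt (2*Real.pi))⁻¹)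
      atTop (nhds 0) := by
    simpa using (tendsto_pow_mul_exp_neg_atTop_nhds_zero 2).mul_const (Real.sqrt (2*Real.pi))⁻¹
  have hpdf : ∀ s : ℝ, 2 ≤ s → stdNormalPDF s ≤ Real.exp (-s) * (Real.sqrt (2*Real.pi))⁻¹ := by
    intro s hs
    rw [stdNormalPDF, div_eq_mul_inv]
    have h : -(s^2)/2 ≤ -s := by nlinarith
    have := Real.exp_le_exp.2 h
    have hq : (0:ℝ) < (Real.sqrt (2*Real.pi))⁻¹ := by positivity
    nlinarith
  have hA : Tendsto (fun s => (s^2 + 1) * stdNormalTail s) atTop (nhds 0) := by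
    apply squeeze_zero' (g := fun s : ℝ => 2 * (s^2 * Real.exp (-s) * (Real.sqrt (2*Real.pi))⁻¹))
    · filter_upwards [eventually_ge_atTop (0:ℝ)] with s _
      have := (stdNormalTail_pos s)
      nlinarith
    · filter_upwards [eventually_ge_atTop (2:ℝ)] with s hs
      have hs0 : (0:ℝ) < s := by linarith
      have hm := mills_upper hs0
      have hp := hpdf s hs
      have htail : stdNormalTail s ≤ stdNormalPDF s / s := by
        rw [le_div_iff₀ hs0]
        linarith [hm]
      calc (s^2 + 1) * stdNormalTail s ≤ (s^2 + 1) * (stdNormalPDF s / s) := by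
            apply mul_le_mul_of_nonneg_left htail (by positivity)
        _ ≤ 2 * (s^2 * Real.exp (-s) * (Real.sqrt (2*Real.pi))⁻¹) := by
            rw [div_eq_mul_inv]
            have h1 : (s^2+1) * (stdNormalPDF s * s⁻¹) = (s^2+1) * s⁻¹ * stdNormalPDF s := by ring
            rw [h1]
            have h2 : (s^2+1) * s⁻¹ ≤ 2 * s := by
              rw [mul_inv_le_iff₀ hs0]; nlinarith
            have h3 : (0:ℝ) ≤ (s^2+1) * s⁻¹ := by positivity
            calc (s^2+1) * s⁻¹ * stdNormalPDF s ≤ 2 * s * (Real.exp (-s) * (Real.sqrt (2*Real.pi))⁻¹) := by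
                  apply mul_le_mul h2 (hpdf s hs) (stdNormalPDF_pos s).le (by linarith)
              _ ≤ 2 * (s^2 * Real.exp (-s) * (Real.sqrt (2*Real.pi))⁻¹) := by
                  have hE : (0:ℝ) < Real.exp (-s) * (Real.sqrt (2*Real.pi))⁻¹ := by positivity
                  nlinarith [mul_nonneg (by nlinarith : (0:ℝ) ≤ s^2 - s) hE.le]
    · simpa using hbase.const_mul 2
  have hB : Tendsto (fun s => s * stdNormalPDF s) atTop (nhds 0) := by
    apply squeeze_zero' (g := fun s : ℝ => s^2 * Real.exp (-s) * (Real.sqrt (2*Real.pi))⁻¹)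
    · filter_upwards [eventually_ge_atTop (0:ℝ)] with s hs
      exact mul_nonneg hs (stdNormalPDF_pos s).le
    · filter_upwards [eventually_ge_atTop (2:ℝ)] with s hs
      have hp := hpdf s hs
      have h1 : s ≤ s^2 := by nlinarith
      have h2 : (0:ℝ) < Real.exp (-s) * (Real.sqrt (2*Real.pi))⁻¹ := by positivity
      calc s * stdNormalPDF s ≤ s * (Real.exp (-s) * (Real.sqrt (2*Real.pi))⁻¹) := by
            apply mul_le_mul_of_nonneg_left hp (by linarith)
        _ ≤ s^2 * Real.exp (-s) * (Real.sqrt (2*Real.pi))⁻¹ := by nlinarith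
    · exact hbase
  simpa using hA.sub hB

lemma mills_lower {t : ℝ} (ht : 0 < t) :
    t * stdNormalPDF t ≤ (t^2 + 1) * stdNormalTail t := by
  set h : ℝ → ℝ := fun s => (s^2 + 1) * stdNormalTail s - s * stdNormalPDF s with hh
  have hanti : AntitoneOn h (Set.Ici t) := by
    apply antitoneOn_of_deriv_nonpos (convex_Ici t)
    · intro s _
      exact (millsAux_hasDeriv s).continuousAt.continuousWithinAt
    · intro s hs
      exact (millsAux_hasDeriv s).differentiableAt.differentiableWithinAt
    · intro s hs
      rw [interior_Ici] at hs
      rw [(millsAux_hasDeriv s).deriv]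
      have := mills_upper (lt_trans ht hs)
      linarith
  have h0 : 0 ≤ h t := by
    apply le_of_tendsto tendsto_millsAux
    filter_upwards [eventually_ge_atTop t] with s hs
    exact hanti (Set.self_mem_Ici) hs hs
  simp only [hh] at h0
  linarith


lemma core_exp {c x : ℝ} (hc : 0 ≤ c) (hx : c + 1 ≤ x) : x * Real.exp (c - x) ≤ c + 1 := by
  have hE := Real.add_one_le_exp (x - c)
  have hEpos : (0:ℝ) < Real.exp (x - c) := Real.exp_pos _
  have h1 : Real.exp (c - x) = (Real.exp (x - c))⁻¹ := by
    rw [← Real.exp_neg]; ring_nf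
  rw [h1, mul_inv_le_iff₀ hEpos]
  nlinarith [mul_le_mul_of_nonneg_left hE (by linarith : (0:ℝ) ≤ c + 1),
    mul_le_mul_of_nonneg_left hx hc]

lemma beta_bound (N : ℕ) (hN : 1 ≤ N) {y : ℝ} (h0 : 0 ≤ y) (h1 : y ≤ 1) :
    (N:ℝ) * y * (1-y)^(N-1) ≤ 1 := by
  have hexp : (1-y)^(N-1) ≤ Real.exp (-(((N-1:ℕ)):ℝ) * y) := by
    calc (1-y)^(N-1) ≤ (Real.exp (-y))^(N-1) :=
          pow_le_pow_left₀ (by linarith) (by linarith [Real.add_one_le_exp (-y)]) _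
      _ = Real.exp (-(((N-1:ℕ)):ℝ) * y) := by
          rw [← Real.exp_nat_mul]; ring_nf
  rcases Nat.lt_or_ge N 2 with h2 | h2
  · interval_cases N
    simpa using h1
  · set m : ℝ := ((N-1:ℕ):ℝ) with hm
    have hm1 : 1 ≤ m := by
      rw [hm]
      exact_mod_cast Nat.one_le_iff_ne_zero.2 (by omega)
    have hNm : (N:ℝ) = m + 1 := by
      rw [hm]
      push_cast [Nat.cast_sub (by omega : 1 ≤ N)]
      ring
    set z : ℝ := m * y with hz
    have hz0 : 0 ≤ z := mul_nonneg (by linarith) h0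
    have hexpz : 2 * z ≤ Real.exp z := by
      have h := Real.add_one_le_exp (z/2)
      have hsq : Real.exp (z/2) * Real.exp (z/2) = Real.exp z := by
        rw [← Real.exp_add]; ring_nf
      nlinarith [sq_nonneg (1 - z/2)]
    have hEz : (0:ℝ) < Real.exp z := Real.exp_pos _
    calc (N:ℝ) * y * (1-y)^(N-1) ≤ (N:ℝ) * y * Real.exp (-m * y) := by
          apply mul_le_mul_of_nonneg_left hexp (by positivity)
      _ = ((m+1) * y) * (Real.exp z)⁻¹ := by
          rw [← Real.exp_neg, hNm, hz]; ring_nf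
      _ ≤ (2 * z) * (Real.exp z)⁻¹ := by
          apply mul_le_mul_of_nonneg_right _ (by positivity)
          rw [hz]; nlinarith
      _ ≤ 1 := by
          rw [mul_inv_le_iff₀ hEz]; linarith

lemma sqrt_two_pi_bounds : 2.5 ≤ Real.sqrt (2 * Real.pi) ∧ Real.sqrt (2 * Real.pi) ≤ 2.51 := by
  have hpi1 := Real.pi_gt_d6
  have hpi2 := Real.pi_lt_d2
  constructor
  · rw [show (2.5:ℝ) = Real.sqrt (2.5^2) from (Real.sqrt_sq (by norm_num)).symm]
    apply Real.sqrt_le_sqrt; nlinarith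
  · rw [show (2.51:ℝ) = Real.sqrt (2.51^2) from (Real.sqrt_sq (by norm_num)).symm]
    apply Real.sqrt_le_sqrt; nlinarith

lemma exp_half_lt : Real.exp (1/2) ≤ 1.6488 := by
  have h := Real.exp_one_lt_d9
  have hsq : Real.exp (1/2) * Real.exp (1/2) = Real.exp 1 := by
    rw [← Real.exp_add]; norm_num
  nlinarith [Real.exp_pos (1/2)]

set_option maxHeartbeats 1000000 in
/-- Upper bound on the density of `Z = min_{k∈[N]} max_{j∈[p]} W_{kj}` for i.i.d. standard
normal `W_{kj}`: the density `f_Z(t) = N p (1 - Φ(t)^p)^{N-1} Φ(t)^{p-1} φ(t)` is bounded by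
`2(√2 + 2) (log (Np))^{3/2}`. -/
theorem minMax_density_upper_bound (N p : ℕ) (hN : 1 ≤ N) (hp : 1 ≤ p)
    (h1 : Real.log ((N : ℝ) * p) < (p : ℝ) / Real.sqrt (2 * Real.pi))
    (h2 : 2 ≤ Real.log ((N : ℝ) * p)) (t : ℝ) :
    (N : ℝ) * p * (1 - stdNormalCDF t ^ p) ^ (N - 1) * stdNormalCDF t ^ (p - 1) *
        stdNormalPDF t ≤
      2 * (Real.sqrt 2 + 2) * Real.log ((N : ℝ) * p) ^ ((3 : ℝ) / 2) := by
  have hsq := sqrt_two_pi_bounds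
  have hsqpos : (0:ℝ) < Real.sqrt (2 * Real.pi) := by linarith [hsq.1]
  set L : ℝ := Real.log ((N:ℝ) * p) with hL
  set F : ℝ := stdNormalCDF t with hFdef
  set u : ℝ := stdNormalTail t with hudef
  have hN1 : (1:ℝ) ≤ (N:ℝ) := by exact_mod_cast hN
  have hp1 : (1:ℝ) ≤ (p:ℝ) := by exact_mod_cast hp
  have hNp : (0:ℝ) < (N:ℝ) * p := by positivity
  have hexpL : Real.exp L = (N:ℝ) * p := Real.exp_log hNp
  have hp5 : (5:ℝ) < (p:ℝ) := by
    have h := (lt_div_iff₀ hsqpos).1 (lt_of_le_of_lt h2 h1)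
    linarith only [h, hsq.1]
  have hlogp : (1:ℝ) ≤ Real.log p := by
    rw [Real.le_log_iff_exp_le (by linarith)]
    calc Real.exp 1 ≤ 2.7182818286 := Real.exp_one_lt_d9.le
      _ ≤ (p:ℝ) := by linarith
  set c : ℝ := Real.log N with hc
  have hc0 : 0 ≤ c := Real.log_nonneg hN1
  have hcL : c + 1 ≤ L := by
    rw [hL, Real.log_mul (by positivity) (by positivity)]
    linarith
  have hNc : (N:ℝ) = Real.exp c := (Real.exp_log (by positivity)).symm
  set s2 : ℝ := Real.sqrt 2 with hs2
  set sL : ℝ := Real.sqrt L with hsL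
  have hs2sq : s2^2 = 2 := Real.sq_sqrt (by norm_num)
  have hs2pos : 0 < s2 := Real.sqrt_pos.2 (by norm_num)
  have hs2b : 1.414 ≤ s2 ∧ s2 ≤ 1.415 := by
    constructor <;> nlinarith only [hs2sq, hs2pos]
  have hsLsq : sL^2 = L := Real.sq_sqrt (by linarith)
  have hsLs2 : s2 ≤ sL := Real.sqrt_le_sqrt (by linarith)
  have hsLb : 1.414 ≤ sL := le_trans hs2b.1 hsLs2
  have hprod : (4.82:ℝ) ≤ (s2 + 2) * sL := by
    nlinarith only [hs2b.1, hsLb]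
  have hRL : 9.64 * L ≤ 2 * (s2 + 2) * (L * sL) := by
    nlinarith only [hprod, h2]
  have hR : L ^ ((3:ℝ)/2) = L * sL := by
    rw [show (3:ℝ)/2 = 1 + 1/2 by norm_num, Real.rpow_add (by linarith), Real.rpow_one,
      ← Real.sqrt_eq_rpow]
  rw [hR]
  have hF0 : 0 < F := stdNormalCDF_pos t
  have hF1 : F < 1 := stdNormalCDF_lt_one t
  have hu0 : 0 < u := stdNormalTail_pos t
  have hFu : F + u = 1 := stdNormalCDF_add_tail t
  have hφpos : 0 < stdNormalPDF t := stdNormalPDF_pos t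
  have hφle : stdNormalPDF t ≤ (Real.sqrt (2 * Real.pi))⁻¹ := stdNormalPDF_le t
  have hy0 : 0 < F^p := pow_pos hF0 p
  have hy1 : F^p ≤ 1 := pow_le_one₀ hF0.le hF1.le
  have h1y : 0 ≤ 1 - F^p := by linarith
  have hFpow : F^(p-1) * F = F^p := by
    rw [← pow_succ]; congr 1; omega
  have hbeta : (N:ℝ) * (F^p) * (1 - F^p)^(N-1) ≤ 1 := beta_bound N hN hy0.le hy1
  rcases le_or_gt t 0 with ht0 | ht0
  -- Case t ≤ 0 : density at most 1
  · have hF12 : F ≤ 1/2 := by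
      rw [hFdef, ← stdNormalCDF_zero]
      exact stdNormalCDF_mono ht0
    have hstep : (N:ℝ) * p * (1 - F^p)^(N-1) * F^(p-1) * stdNormalPDF t ≤
        (N:ℝ) * p * 1 * (1/2:ℝ)^(p-1) * (Real.sqrt (2 * Real.pi))⁻¹ := by
      have e1 : (1 - F^p)^(N-1) ≤ 1 := pow_le_one₀ h1y (by linarith)
      have e2 : F^(p-1) ≤ (1/2:ℝ)^(p-1) := pow_le_pow_left₀ hF0.le hF12 _
      gcongr <;> first
        | exact mul_nonneg (by positivity) (pow_nonneg h1y _)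
        | exact hF0.le
        | exact e1
        | exact e2
        | exact hφle
    have hLle : L ≤ ((p-1:ℕ):ℝ) * Real.log 2 := by
      have hcast : ((p-1:ℕ):ℝ) = (p:ℝ) - 1 := by
        push_cast [Nat.cast_sub hp]; ring
      have hdiv : L * Real.sqrt (2*Real.pi) < (p:ℝ) := (lt_div_iff₀ hsqpos).1 h1
      have hL25 : 2.5 * L ≤ (p:ℝ) := by nlinarith only [hdiv, hsq.1, h2]
      have hlog2 : 0.6931471803 * ((p:ℝ)-1) ≤ ((p:ℝ)-1) * Real.log 2 := by
        nlinarith only [Real.log_two_gt_d9, hp5]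
      rw [hcast]
      linarith only [hL25, hlog2, hp5]
    have h2p : Real.exp L ≤ 2^(p-1) := by
      calc Real.exp L ≤ Real.exp (((p-1:ℕ):ℝ) * Real.log 2) := Real.exp_le_exp.2 hLle
        _ = Real.exp (Real.log 2) ^ (p-1) := Real.exp_nat_mul _ _
        _ = 2^(p-1) := by rw [Real.exp_log two_pos]
    have hmain : (N:ℝ) * p * 1 * (1/2:ℝ)^(p-1) * (Real.sqrt (2 * Real.pi))⁻¹ ≤ 1 := by
      have h2pos : (0:ℝ) < (2:ℝ)^(p-1) := by positivity
      have hNple : (N:ℝ) * p * (1/2:ℝ)^(p-1) ≤ 1 := by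
        rw [one_div, inv_pow, mul_inv_le_iff₀ h2pos, one_mul, ← hexpL]
        exact h2p
      have hinv : (Real.sqrt (2 * Real.pi))⁻¹ ≤ 1 := by
        rw [inv_le_one_iff₀]; right; linarith [hsq.1]
      calc (N:ℝ) * p * 1 * (1/2:ℝ)^(p-1) * (Real.sqrt (2 * Real.pi))⁻¹
          = ((N:ℝ) * p * (1/2:ℝ)^(p-1)) * (Real.sqrt (2 * Real.pi))⁻¹ := by ring
        _ ≤ 1 * 1 := mul_le_mul hNple hinv (by positivity) one_pos.le
        _ = 1 := by norm_num
    linarith only [hstep, hmain, hRL, h2]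
  -- Case t > 0
  · have hF12 : (1:ℝ)/2 ≤ F := by
      rw [hFdef, ← stdNormalCDF_zero]
      exact stdNormalCDF_mono ht0.le
    set D : ℝ := (N:ℝ) * (F^p) * (1 - F^p)^(N-1) with hD
    have hD0 : 0 ≤ D := by
      apply mul_nonneg (by positivity) (pow_nonneg h1y _)
    have hf_eq : (N:ℝ) * p * (1 - F^p)^(N-1) * F^(p-1) * stdNormalPDF t
        = (p:ℝ) * stdNormalPDF t * D / F := by
      rw [eq_div_iff hF0.ne', hD, ← hFpow]; ring
    have hf_le : (N:ℝ) * p * (1 - F^p)^(N-1) * F^(p-1) * stdNormalPDF t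
        ≤ 2 * ((p:ℝ) * stdNormalPDF t * D) := by
      rw [hf_eq, div_le_iff₀ hF0]
      nlinarith only [hF12,
        mul_nonneg (mul_nonneg (by positivity : (0:ℝ) ≤ (p:ℝ)) hφpos.le) hD0]
    have hFexp : F ≤ Real.exp (-u) := by
      have := Real.add_one_le_exp (-u)
      linarith
    have hyexp : F^p ≤ Real.exp (-((p:ℝ) * u)) := by
      calc F^p ≤ (Real.exp (-u))^p := pow_le_pow_left₀ hF0.le hFexp p
        _ = Real.exp (-((p:ℝ) * u)) := by rw [← Real.exp_nat_mul]; ring_nf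
    have hDexp : D ≤ Real.exp (c - (p:ℝ) * u) := by
      have e1 : (1 - F^p)^(N-1) ≤ 1 := pow_le_one₀ h1y (by linarith)
      calc D ≤ (N:ℝ) * (F^p) * 1 := by
            apply mul_le_mul_of_nonneg_left e1 (by positivity)
        _ = (N:ℝ) * F^p := by ring
        _ ≤ Real.exp c * Real.exp (-((p:ℝ) * u)) := by
            rw [← hNc]
            apply mul_le_mul_of_nonneg_left hyexp (by positivity)
        _ = Real.exp (c - (p:ℝ) * u) := by rw [← Real.exp_add]; ring_nf
    have hD1 : D ≤ 1 := hbeta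
    rcases le_or_gt ((p:ℝ) * Real.exp (-(t^2)/2)) (Real.sqrt (2*Real.pi) * L) with hcase | hcase
    -- Sub-case (i): far right tail, bound 2L
    · have hφt : (p:ℝ) * stdNormalPDF t ≤ L := by
        rw [stdNormalPDF, ← mul_div_assoc, div_le_iff₀ hsqpos]
        linarith only [hcase]
      have hf2L : (N:ℝ) * p * (1 - F^p)^(N-1) * F^(p-1) * stdNormalPDF t ≤ 2 * L := by
        calc (N:ℝ) * p * (1 - F^p)^(N-1) * F^(p-1) * stdNormalPDF t
            ≤ 2 * ((p:ℝ) * stdNormalPDF t * D) := hf_le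
          _ ≤ 2 * ((p:ℝ) * stdNormalPDF t * 1) := by
              apply mul_le_mul_of_nonneg_left _ (by norm_num)
              apply mul_le_mul_of_nonneg_left hD1 (by positivity)
          _ = 2 * ((p:ℝ) * stdNormalPDF t) := by ring
          _ ≤ 2 * L := by linarith only [hφt]
      linarith only [hf2L, hRL, h2]
    -- Sub-case (ii): t^2 ≤ 2L
    · have ht2L : t^2 ≤ 2 * L := by
        have hE : Real.exp (t^2/2) * (Real.sqrt (2*Real.pi) * L) < (p:ℝ) := by
          have hmul := mul_lt_mul_of_pos_left hcase (Real.exp_pos (t^2/2))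
          have hid : Real.exp (t^2/2) * ((p:ℝ) * Real.exp (-(t^2)/2)) = (p:ℝ) := by
            rw [mul_comm ((p:ℝ)), ← mul_assoc, ← Real.exp_add,
              show t^2/2 + -(t^2)/2 = (0:ℝ) by ring, Real.exp_zero, one_mul]
          linarith only [hmul, hid.le, hid.ge]
        have h5' : (5:ℝ) ≤ Real.sqrt (2*Real.pi) * L := by
          nlinarith only [hsq.1, h2]
        have hEp : Real.exp (t^2/2) < (p:ℝ) := by
          nlinarith only [hE, h5', Real.exp_pos (t^2/2)]
        have hpNp : (p:ℝ) ≤ Real.exp L := by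
          rw [hexpL]; nlinarith only [hN1, hp1]
        have := (Real.exp_lt_exp).1 (lt_of_lt_of_le hEp hpNp)
        linarith
      have htsL : t ≤ s2 * sL := by
        have hts : t = Real.sqrt (t^2) := (Real.sqrt_sq ht0.le).symm
        rw [hts, hs2, hsL, ← Real.sqrt_mul (by norm_num)]
        exact Real.sqrt_le_sqrt ht2L
      rcases lt_or_ge t 1 with ht1 | ht1
      -- Sub-sub-case 0 < t < 1
      · set u1 : ℝ := stdNormalTail 1 with hu1
        have hu1pos : 0 < u1 := stdNormalTail_pos 1
        have huu1 : u1 ≤ u := stdNormalTail_anti ht1.le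
        have hmills1 : Real.exp (-(1:ℝ)/2) / Real.sqrt (2*Real.pi) ≤ 2 * u1 := by
          have hm := mills_lower (t := 1) one_pos
          have h1pdf : stdNormalPDF 1 = Real.exp (-(1:ℝ)/2) / Real.sqrt (2*Real.pi) := by
            rw [stdNormalPDF]; norm_num
          rw [h1pdf] at hm; linarith
        have hpDu : (p:ℝ) * D * u1 ≤ c + 1 := by
          rcases le_or_gt ((p:ℝ) * u1) (c + 1) with hx | hx
          · calc (p:ℝ) * D * u1 ≤ (p:ℝ) * 1 * u1 := by
                  apply mul_le_mul_of_nonneg_right _ hu1pos.le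
                  exact mul_le_mul_of_nonneg_left hD1 (by positivity)
              _ = (p:ℝ) * u1 := by ring
              _ ≤ c + 1 := hx
          · have hDe : D ≤ Real.exp (c - (p:ℝ) * u1) := by
              calc D ≤ Real.exp (c - (p:ℝ) * u) := hDexp
                _ ≤ Real.exp (c - (p:ℝ) * u1) := by
                    apply Real.exp_le_exp.2
                    nlinarith only [huu1, hp1]
            calc (p:ℝ) * D * u1 ≤ (p:ℝ) * Real.exp (c - (p:ℝ) * u1) * u1 := by
                  apply mul_le_mul_of_nonneg_right _ hu1pos.le
                  exact mul_le_mul_of_nonneg_left hDe (by positivity)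
              _ = ((p:ℝ) * u1) * Real.exp (c - (p:ℝ) * u1) := by ring
              _ ≤ c + 1 := core_exp hc0 hx.le
        -- numeric lower bound on u1
        have hexpinv : (0.6:ℝ) ≤ Real.exp (-(1:ℝ)/2) := by
          have h := exp_half_lt
          have hm : Real.exp (-(1:ℝ)/2) * Real.exp ((1:ℝ)/2) = 1 := by
            rw [← Real.exp_add]; norm_num
          nlinarith only [h, hm, Real.exp_pos (-(1:ℝ)/2), Real.exp_pos ((1:ℝ)/2)]
        have hu1lb : (0.119:ℝ) ≤ u1 := by
          have hlow : (0.6:ℝ)/2.51 ≤ Real.exp (-(1:ℝ)/2) / Real.sqrt (2*Real.pi) :=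
            div_le_div₀ (Real.exp_pos _).le hexpinv hsqpos hsq.2
          have h24 : (0.6:ℝ)/2.51 ≤ 2 * u1 := le_trans hlow hmills1
          linarith only [h24]
        have hinv04 : (Real.sqrt (2*Real.pi))⁻¹ ≤ 0.4 := by
          have : (Real.sqrt (2*Real.pi))⁻¹ ≤ (2.5:ℝ)⁻¹ :=
            inv_anti₀ (by norm_num) hsq.1
          linarith [this]
        have hpD0 : 0 ≤ (p:ℝ) * D := by positivity
        have hpDL : (0.119:ℝ) * ((p:ℝ) * D) ≤ L := by
          nlinarith only [hpDu, hu1lb, hpD0, hcL]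
        have hfφ : (N:ℝ) * p * (1 - F^p)^(N-1) * F^(p-1) * stdNormalPDF t
            ≤ 2 * (0.4 * ((p:ℝ) * D)) := by
          calc (N:ℝ) * p * (1 - F^p)^(N-1) * F^(p-1) * stdNormalPDF t
              ≤ 2 * ((p:ℝ) * stdNormalPDF t * D) := hf_le
            _ = 2 * (stdNormalPDF t * ((p:ℝ) * D)) := by ring
            _ ≤ 2 * (0.4 * ((p:ℝ) * D)) := by
                apply mul_le_mul_of_nonneg_left _ (by norm_num)
                apply mul_le_mul_of_nonneg_right (le_trans hφle hinv04) hpD0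
        linarith only [hfφ, hpDL, hRL, h2]
      -- Sub-sub-case 1 ≤ t
      · have ht0' : (0:ℝ) < t := lt_of_lt_of_le one_pos ht1
        have hmt := mills_lower ht0'
        have hXD : ((p:ℝ) * u) * D ≤ c + 1 := by
          rcases le_or_gt ((p:ℝ) * u) (c + 1) with hx | hx
          · calc ((p:ℝ) * u) * D ≤ ((p:ℝ) * u) * 1 :=
                  mul_le_mul_of_nonneg_left hD1 (by positivity)
              _ = (p:ℝ) * u := by ring
              _ ≤ c + 1 := hx
          · calc ((p:ℝ) * u) * D ≤ ((p:ℝ) * u) * Real.exp (c - (p:ℝ) * u) :=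
                  mul_le_mul_of_nonneg_left hDexp (by positivity)
              _ ≤ c + 1 := core_exp hc0 hx.le
        have hft : ((N:ℝ) * p * (1 - F^p)^(N-1) * F^(p-1) * stdNormalPDF t) * t
            ≤ 2 * ((t^2 + 1) * L) := by
          calc ((N:ℝ) * p * (1 - F^p)^(N-1) * F^(p-1) * stdNormalPDF t) * t
              ≤ (2 * ((p:ℝ) * stdNormalPDF t * D)) * t := by
                apply mul_le_mul_of_nonneg_right hf_le ht0'.le
            _ = 2 * ((p:ℝ) * D * (t * stdNormalPDF t)) := by ring
            _ ≤ 2 * ((p:ℝ) * D * ((t^2 + 1) * u)) := by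
                apply mul_le_mul_of_nonneg_left _ (by norm_num)
                exact mul_le_mul_of_nonneg_left hmt (by positivity)
            _ = 2 * ((t^2 + 1) * (((p:ℝ) * u) * D)) := by ring
            _ ≤ 2 * ((t^2 + 1) * (c + 1)) := by
                apply mul_le_mul_of_nonneg_left _ (by norm_num)
                apply mul_le_mul_of_nonneg_left hXD (by positivity)
            _ ≤ 2 * ((t^2 + 1) * L) := by
                apply mul_le_mul_of_nonneg_left _ (by norm_num)
                apply mul_le_mul_of_nonneg_left hcL (by positivity)
        have hfb : (N:ℝ) * p * (1 - F^p)^(N-1) * F^(p-1) * stdNormalPDF t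
            ≤ 2 * (t + 1) * L := by
          apply le_of_mul_le_mul_right _ ht0'
          calc ((N:ℝ) * p * (1 - F^p)^(N-1) * F^(p-1) * stdNormalPDF t) * t
              ≤ 2 * ((t^2 + 1) * L) := hft
            _ ≤ 2 * (t + 1) * L * t := by nlinarith only [ht1, h2]
        have h5 : 2 * (t + 1) * L ≤ 2 * (s2 * sL + 1) * L := by
          nlinarith only [htsL, h2]
        have h6 : 2 * (s2 * sL + 1) * L ≤ 2 * (s2 + 2) * (L * sL) := by
          nlinarith only [h2, hsLb]
        linarith only [hfb, h5, h6]
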